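/- Let δ = (r_b^max - μ_b)/σ_b - (r_c^max - μ_c)/σ_c, Δ = r* - r_c^max with Δ > 0, σ_b, σ_c > 0, r_c^max ≥ r_b^max, and suppose σ_c ≥ (1 - δσ_c/Δ)·σ_b. Then (r* - μ_b)/σ_b - (r* - μ_c)/σ_c ≥ 0, i.e., the z-score of the optimal reward r* under the candidate distribution is at most its z-score under the base distribution. -/

import Mathlib

/-- Key algebraic inequality in DISC's iteration-invariance lemma: with z-score drop `δ`,
optimality gap `Δ = r* - r_c^max > 0`, `r_c^max ≥ r_b^max`, and the slow-convergence condition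
`σ_c ≥ (1 - δσ_c/Δ)σ_b`, the z-score of `r*` under the candidate is at most that under the base. -/
theorem disc_zscore_inequality
    (μb σb μc σc rbmax rcmax rstar δ Δ : ℝ)
    (hσb : 0 < σb) (hσc : 0 < σc)
    (hδ : δ = (rbmax - μb) / σb - (rcmax - μc) / σc)
    (hΔ : Δ = rstar - rcmax) (hΔpos : 0 < Δ)
    (hmax : rbmax ≤ rcmax)
    (hslow : (1 - δ * σc / Δ) * σb ≤ σc) :
    0 ≤ (rstar - μb) / σb - (rstar - μc) / σc := by
  subst hδ hΔ
  rw [sub_nonneg, div_le_div_iff₀ hσc hσb]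
  have hΔ' : rstar - rcmax ≠ 0 := ne_of_gt hΔpos
  field_simp at hslow
  nlinarith [mul_pos hσb hσc, mul_pos hσc hΔpos, mul_pos hσb hΔpos,
    mul_nonneg (mul_nonneg (sub_nonneg.2 hmax) hσc.le) hσc.le,
    mul_nonneg (mul_nonneg (sub_nonneg.2 hmax) hσb.le) hσc.le]
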